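/- Let L_w be the dual Laplacian of a connected dual number weighted graph on n vertices with dual Moore-Penrose inverse L_w†. If X is any {1}-inverse of L_w (L_w X L_w = L_w), then for all i ≠ j, (1_i - 1_j)ᵀ X (1_i - 1_j) = (1_i - 1_j)ᵀ L_w† (1_i - 1_j). In particular the dual resistance distance R_{ij}(G^w) := (L_w†)_{ii} + (L_w†)_{jj} - 2(L_w†)_{ij} equals X_{ii} + X_{jj} - X_{ij} - X_{ji} for every {1}-inverse X. -/

import Mathlib

open Matrix

/-- The dual matrix `A_s + A_d ε` built from its standard and infinitesimal parts. -/
def dm {m n : Type*} (A B : Matrix m n ℝ) : Matrix m n (DualNumber ℝ) :=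
  Matrix.of fun i j => TrivSqZeroExt.inl (A i j) + TrivSqZeroExt.inr (B i j)

/-- The kernel of the Laplacian of a connected graph consists of constant vectors. -/
lemma lap_ker_const {n : ℕ} (G : SimpleGraph (Fin n)) [DecidableRel G.Adj]
    (hG : G.Connected) (v : Fin n → ℝ) (h : G.lapMatrix ℝ *ᵥ v = 0) :
    ∀ a b : Fin n, v a = v b := by
  have := (G.lapMatrix_mulVec_eq_zero_iff_forall_reachable (x := v)).mp h
  exact fun a b => this a b (hG.preconnected a b)

lemma dm_mulVec_fst {n : ℕ} (A B : Matrix (Fin n) (Fin n) ℝ) (v : Fin n → DualNumber ℝ)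
    (k : Fin n) :
    ((dm A B *ᵥ v) k).fst = (A *ᵥ fun l => (v l).fst) k := by
  simp [dm, mulVec, dotProduct, TrivSqZeroExt.fst_sum, TrivSqZeroExt.fst_mul]

lemma dm_mulVec_snd {n : ℕ} (A B : Matrix (Fin n) (Fin n) ℝ) (v : Fin n → DualNumber ℝ)
    (k : Fin n) :
    ((dm A B *ᵥ v) k).snd
      = (A *ᵥ fun l => (v l).snd) k + (B *ᵥ fun l => (v l).fst) k := by
  simp only [dm, mulVec, dotProduct, TrivSqZeroExt.snd_sum, TrivSqZeroExt.snd_mul,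
    Finset.sum_add_distrib, Matrix.of_apply, TrivSqZeroExt.fst_add, TrivSqZeroExt.snd_add,
    TrivSqZeroExt.fst_inl, TrivSqZeroExt.snd_inl, TrivSqZeroExt.fst_inr, TrivSqZeroExt.snd_inr,
    smul_eq_mul, MulOpposite.smul_eq_mul_unop, MulOpposite.unop_op, add_zero, zero_add,
    zero_mul, mul_zero]

/-- For the dual Laplacian `L_w` of a connected dual number weighted graph with dual
Moore-Penrose inverse `L_w†`, every `{1}`-inverse `X` of `L_w` yields the same dual
resistance distance: for `i ≠ j`,
`X_{ii} + X_{jj} - X_{ij} - X_{ji} = (L_w†)_{ii} + (L_w†)_{jj} - 2 (L_w†)_{ij}`. -/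
theorem dual_resistance_distance_indep_one_inverse {n : ℕ} (hn : 0 < n)
    (G : SimpleGraph (Fin n)) [DecidableRel G.Adj] (hG : G.Connected)
    (Lhat : Matrix (Fin n) (Fin n) ℝ) (hsym : Lhatᵀ = Lhat)
    (hrow : Lhat *ᵥ (fun _ => (1 : ℝ)) = 0)
    (hcol : (fun _ => (1 : ℝ)) ᵥ* Lhat = 0)
    (Lw Lwd : Matrix (Fin n) (Fin n) (DualNumber ℝ))
    (hLw : Lw = dm (G.lapMatrix ℝ) Lhat)
    (hmp1 : Lw * Lwd * Lw = Lw) (hmp2 : Lwd * Lw * Lwd = Lwd)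
    (hmp3 : (Lw * Lwd)ᵀ = Lw * Lwd) (hmp4 : (Lwd * Lw)ᵀ = Lwd * Lw)
    (X : Matrix (Fin n) (Fin n) (DualNumber ℝ)) (hX : Lw * X * Lw = Lw) :
    ∀ i j : Fin n, i ≠ j →
      X i i + X j j - X i j - X j i = Lwd i i + Lwd j j - 2 * Lwd i j := by
  intro i j hij
  -- Lw is symmetric
  have hLsym : Lwᵀ = Lw := by
    rw [hLw]
    ext a b
    all_goals
      have hlap : G.lapMatrix ℝ b a = G.lapMatrix ℝ a b :=
        congrFun (congrFun (G.isSymm_lapMatrix (R := ℝ)) a) b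
    all_goals
      have hhat : Lhat b a = Lhat a b := congrFun (congrFun hsym a) b
    all_goals
      simp only [transpose_apply, dm, Matrix.of_apply, TrivSqZeroExt.fst_add,
        TrivSqZeroExt.snd_add, TrivSqZeroExt.fst_inl, TrivSqZeroExt.snd_inl,
        TrivSqZeroExt.fst_inr, TrivSqZeroExt.snd_inr, add_zero, zero_add]
    · exact hlap
    · exact hhat
  -- the kernel of Lw over the dual numbers consists of constant vectors
  have hker : ∀ v : Fin n → DualNumber ℝ, Lw *ᵥ v = 0 → ∀ a b : Fin n, v a = v b := by
    intro v hv a b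
    have hfst : G.lapMatrix ℝ *ᵥ (fun l => (v l).fst) = 0 := by
      funext k
      have := congrFun hv k
      rw [hLw] at this
      have := congrArg TrivSqZeroExt.fst this
      rw [dm_mulVec_fst] at this
      simpa using this
    have hc1 := lap_ker_const G hG _ hfst
    have hhat : Lhat *ᵥ (fun l => (v l).fst) = 0 := by
      have hconst : (fun l => (v l).fst) = (v a).fst • (fun _ => (1:ℝ)) := by
        funext l; simp [hc1 l a]
      rw [hconst, Matrix.mulVec_smul, hrow, smul_zero]
    have hsnd : G.lapMatrix ℝ *ᵥ (fun l => (v l).snd) = 0 := by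
      funext k
      have := congrFun hv k
      rw [hLw] at this
      have := congrArg TrivSqZeroExt.snd this
      rw [dm_mulVec_snd] at this
      have h2 := congrFun hhat k
      simp only [Pi.zero_apply] at h2 this
      simpa [h2] using this
    have hc2 := lap_ker_const G hG _ hsnd
    exact TrivSqZeroExt.ext (hc1 a b) (hc2 a b)
  -- columns of any M with Lw * M = 0 are constant
  have hconst : ∀ M : Matrix (Fin n) (Fin n) (DualNumber ℝ), Lw * M = 0 →
      ∀ k a b : Fin n, M a k = M b k := by
    intro M hM k a b
    refine hker (fun r => M r k) ?_ a b
    funext r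
    have := congrFun (congrFun hM r) k
    simpa [mul_apply, mulVec, dotProduct] using this
  -- the test vector u = e_i - e_j
    -- (defined below)
  set u : Fin n → DualNumber ℝ :=
    fun k => (if k = i then 1 else 0) - (if k = j then 1 else 0) with hu
  have keyMv : ∀ M : Matrix (Fin n) (Fin n) (DualNumber ℝ),
      M *ᵥ u = fun k => M k i - M k j := by
    intro M
    funext k
    simp [hu, mulVec, dotProduct, mul_sub, Finset.sum_sub_distrib, mul_ite, mul_one,
      mul_zero]
  have keyDot : ∀ w : Fin n → DualNumber ℝ, u ⬝ᵥ w = w i - w j := by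
    intro w
    simp [hu, dotProduct, sub_mul, Finset.sum_sub_distrib, ite_mul, one_mul, zero_mul]
  -- projection lemma: if Lw * (1 - M) = 0 and 1 - M symmetric then M *ᵥ u = u
  have hproj : ∀ M : Matrix (Fin n) (Fin n) (DualNumber ℝ),
      Lw * (1 - M) = 0 → (1 - M)ᵀ = 1 - M → M *ᵥ u = u := by
    intro M h0 hMs
    have hcol := hconst (1 - M) h0
    have hrc : ∀ k, (1 - M) k i = (1 - M) k j := by
      intro k
      have e1 : (1 - M) k i = (1 - M) i k := by
        simpa using congrFun (congrFun hMs i) k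
      have e2 : (1 - M) k j = (1 - M) j k := by
        simpa using congrFun (congrFun hMs j) k
      rw [e1, e2, hcol k i j]
    funext k
    have := hrc k
    simp only [Matrix.sub_apply, one_apply] at this
    have hM : M k i - M k j = (if k = i then (1:DualNumber ℝ) else 0)
        - (if k = j then 1 else 0) := by
      linear_combination -this
    rw [keyMv M]
    simpa [hu] using hM
  -- (Lw * Lwd) *ᵥ u = u
  have hPu : (Lw * Lwd) *ᵥ u = u := by
    refine hproj _ ?_ ?_
    · have h1 : (1 - Lw * Lwd) * Lw = 0 := by
        rw [sub_mul, one_mul, hmp1, sub_self]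
      calc Lw * (1 - Lw * Lwd) = ((1 - Lw * Lwd)ᵀ * Lwᵀ)ᵀ := by
            rw [← transpose_mul, transpose_transpose]
        _ = ((1 - Lw * Lwd) * Lw)ᵀ := by
            rw [hLsym, transpose_sub, transpose_one, hmp3]
        _ = 0 := by rw [h1, transpose_zero]
    · rw [transpose_sub, transpose_one, hmp3]
  -- (Lwd * Lw) *ᵥ u = u
  have hQu : (Lwd * Lw) *ᵥ u = u := by
    refine hproj _ ?_ ?_
    · rw [mul_sub, mul_one, ← mul_assoc, hmp1, sub_self]
    · rw [transpose_sub, transpose_one, hmp4]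
  -- symmetric matrices move across the dot product
  have hdot : ∀ (M : Matrix (Fin n) (Fin n) (DualNumber ℝ)), Mᵀ = M →
      ∀ v w : Fin n → DualNumber ℝ, (M *ᵥ v) ⬝ᵥ w = v ⬝ᵥ (M *ᵥ w) := by
    intro M hM v w
    conv_lhs => rw [← hM, mulVec_transpose]
    rw [← dotProduct_mulVec]
  -- the main identity  u ⬝ᵥ (X *ᵥ u) = u ⬝ᵥ (Lwd *ᵥ u)
  have hmain : u ⬝ᵥ (X *ᵥ u) = u ⬝ᵥ (Lwd *ᵥ u) := by
    have hmid : (Lwd * Lw) * X * (Lw * Lwd) = Lwd := by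
      calc (Lwd * Lw) * X * (Lw * Lwd)
          = Lwd * (Lw * X * Lw) * Lwd := by noncomm_ring
        _ = Lwd * Lw * Lwd := by rw [hX]
        _ = Lwd := hmp2
    calc u ⬝ᵥ (X *ᵥ u) = ((Lwd * Lw) *ᵥ u) ⬝ᵥ (X *ᵥ ((Lw * Lwd) *ᵥ u)) := by
          rw [hPu, hQu]
      _ = u ⬝ᵥ ((Lwd * Lw) *ᵥ (X *ᵥ ((Lw * Lwd) *ᵥ u))) := by
          rw [hdot (Lwd * Lw) hmp4]
      _ = u ⬝ᵥ (((Lwd * Lw) * X * (Lw * Lwd)) *ᵥ u) := by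
          rw [mulVec_mulVec, mulVec_mulVec]
      _ = u ⬝ᵥ (Lwd *ᵥ u) := by rw [hmid]
  -- Lwd is symmetric
  have hsymd : Lwdᵀ = Lwd := by
    have hACA : Lw * Lwdᵀ * Lw = Lw := by
      have := congrArg transpose hmp1
      rw [transpose_mul, transpose_mul, hLsym] at this
      rw [← mul_assoc] at this
      exact this
    have hAC : Lw * Lwdᵀ = Lwd * Lw := by
      calc Lw * Lwdᵀ = (Lwd * Lwᵀ)ᵀ := by rw [transpose_mul, transpose_transpose]
        _ = (Lwd * Lw)ᵀ := by rw [hLsym]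
        _ = Lwd * Lw := hmp4
    have hCA : Lwdᵀ * Lw = Lw * Lwd := by
      calc Lwdᵀ * Lw = (Lwᵀ * Lwd)ᵀ := by rw [transpose_mul, transpose_transpose]
        _ = (Lw * Lwd)ᵀ := by rw [hLsym]
        _ = Lw * Lwd := hmp3
    -- A*B = B*A
    have hcomm : Lw * Lwd = Lwd * Lw := by
      calc Lw * Lwd = (Lw * Lwdᵀ * Lw) * Lwd := by rw [hACA]
        _ = (Lw * Lwdᵀ) * (Lw * Lwd) := by rw [mul_assoc]
        _ = ((Lw * Lwd)ᵀ * (Lw * Lwdᵀ)ᵀ)ᵀ := by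
            rw [← transpose_mul, transpose_transpose]
        _ = ((Lw * Lwd) * (Lw * Lwdᵀ))ᵀ := by
            rw [hmp3, hAC, hmp4]
        _ = ((Lw * Lwd * Lw) * Lwdᵀ)ᵀ := congrArg transpose (by noncomm_ring)
        _ = (Lw * Lwdᵀ)ᵀ := by rw [hmp1]
        _ = (Lwd * Lw)ᵀ := by rw [hAC]
        _ = Lwd * Lw := hmp4
    have hCAC : Lwdᵀ * Lw * Lwdᵀ = Lwdᵀ := by
      have := congrArg transpose hmp2
      rw [transpose_mul, transpose_mul, hLsym] at this
      rw [← mul_assoc] at this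
      exact this
    calc Lwdᵀ = Lwdᵀ * Lw * Lwdᵀ := hCAC.symm
      _ = Lwdᵀ * (Lw * Lwdᵀ) := by rw [mul_assoc]
      _ = Lwdᵀ * (Lw * Lwd) := by rw [hAC, ← hcomm]
      _ = (Lwdᵀ * Lw) * Lwd := by rw [mul_assoc]
      _ = (Lw * Lwd) * Lwd := by rw [hCA]
      _ = (Lwd * Lw) * Lwd := by rw [hcomm]
      _ = Lwd := hmp2
  have hji : Lwd j i = Lwd i j := by
    have := congrFun (congrFun hsymd i) j
    simpa [transpose_apply] using this
  -- put everything together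
  have hL : u ⬝ᵥ (X *ᵥ u) = X i i + X j j - X i j - X j i := by
    rw [keyMv X, keyDot]
    ring
  have hR : u ⬝ᵥ (Lwd *ᵥ u) = Lwd i i + Lwd j j - 2 * Lwd i j := by
    rw [keyMv Lwd, keyDot, hji]
    ring
  rw [← hL, ← hR, hmain]
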